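/- Jump properties of the edge nonconforming bubble (first step of the proof of Lemma 1.2): let p be a positive integer, let A, B, C be affinely independent points of ℝ², and let λ_A : ℝ² → ℝ be the barycentric coordinate of the triangle conv{A,B,C} with λ_A(A) = 1 and λ_A(B) = λ_A(C) = 0. Define b(x) := L_p(1 − 2λ_A(x)). Then: (a) b(B + t(C−B)) = 1 for all t ∈ [0,1], i.e., b is identically 1 on the edge from B to C; (b) for X ∈ {B, C}, b(A + t(X−A)) = L_p(2t−1) for all t ∈ [0,1]; consequently (c) for X ∈ {B, C} and every univariate polynomial q of degree at most p−1, ∫₀¹ b(A + t(X−A)) q(t) dt = 0. -/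

import Mathlib

open MeasureTheory Polynomial

/-- The Legendre polynomial of degree `k`, via Rodrigues' formula
`L_k(x) = (1/(2^k k!)) (d/dx)^k [(x² − 1)^k]`. -/
noncomputable def legendre (k : ℕ) : Polynomial ℝ :=
  ((2 ^ k * k.factorial : ℝ)⁻¹) •
    ((fun q : Polynomial ℝ => Polynomial.derivative q)^[k] ((Polynomial.X ^ 2 - 1) ^ k))

lemma hFact (p : ℕ) : ((X:ℝ[X])^2 - 1)^p = (X - C 1)^p * (X - C (-1))^p := by
  rw [← mul_pow]; congr 1; simp; ring

lemma vanish_one (p j : ℕ) (hj : j < p) :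
    (Polynomial.derivative^[j] (((X:ℝ[X])^2 - 1)^p)).eval 1 = 0 := by
  rw [hFact, Polynomial.iterate_derivative_mul, eval_finset_sum]
  apply Finset.sum_eq_zero
  intro k hk
  rw [Polynomial.iterate_derivative_X_sub_pow]
  simp only [eval_smul, eval_mul, eval_pow, eval_sub, eval_X, eval_C, sub_self]
  rw [zero_pow (by simp at hk; omega)]
  simp

lemma vanish_neg_one (p j : ℕ) (hj : j < p) :
    (Polynomial.derivative^[j] (((X:ℝ[X])^2 - 1)^p)).eval (-1) = 0 := by
  rw [hFact, Polynomial.iterate_derivative_mul, eval_finset_sum]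
  apply Finset.sum_eq_zero
  intro k hk
  rw [Polynomial.iterate_derivative_X_sub_pow p k (-1 : ℝ)]
  simp only [eval_smul, eval_mul, eval_pow, eval_sub, eval_X, eval_C, sub_neg_eq_add,
    neg_add_cancel]
  rw [zero_pow (by simp at hk; omega)]
  simp

lemma eval_one_top (p : ℕ) :
    (Polynomial.derivative^[p] (((X:ℝ[X])^2 - 1)^p)).eval 1 = (2^p * p.factorial : ℝ) := by
  rw [hFact, Polynomial.iterate_derivative_mul, eval_finset_sum]
  rw [Finset.sum_eq_single_of_mem 0 (Finset.mem_range.2 (Nat.succ_pos p))]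
  · rw [Nat.choose_zero_right, one_smul, Nat.sub_zero,
      Polynomial.iterate_derivative_X_sub_pow_self, Function.iterate_zero_apply]
    simp only [eval_mul, eval_natCast, eval_pow, eval_sub, eval_X, eval_C, sub_neg_eq_add]
    norm_num
    ring
  · intro k hk hk0
    rw [Polynomial.iterate_derivative_X_sub_pow]
    simp only [eval_smul, eval_mul, eval_pow, eval_sub, eval_X, eval_C, sub_self]
    rw [show p - (p - k) = k by simp at hk; omega, zero_pow hk0]
    simp

lemma legendre_eval_one (p : ℕ) : (legendre p).eval 1 = 1 := by
  have h : ((fun q : Polynomial ℝ => Polynomial.derivative q)^[p]) = Polynomial.derivative^[p] :=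
    rfl
  rw [legendre, h, eval_smul, eval_one_top, smul_eq_mul]
  rw [inv_mul_cancel₀]
  positivity

lemma ibp (m : ℕ) : ∀ (g s : ℝ[X]) (a b : ℝ),
    (∀ j < m, (Polynomial.derivative^[j] g).eval a = 0 ∧
      (Polynomial.derivative^[j] g).eval b = 0) →
    s.natDegree < m →
    ∫ x in a..b, (Polynomial.derivative^[m] g).eval x * s.eval x = 0 := by
  induction m with
  | zero => intro g s a b _ hs; exact absurd hs (Nat.not_lt_zero _)
  | succ m ih =>
    intro g s a b hvan hs
    have key := intervalIntegral.integral_deriv_mul_eq_sub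
      (u := fun x => (Polynomial.derivative^[m] g).eval x)
      (v := fun x => s.eval x)
      (u' := fun x => (Polynomial.derivative^[m+1] g).eval x)
      (v' := fun x => (Polynomial.derivative s).eval x)
      (a := a) (b := b)
      (fun x _ => by
        rw [Function.iterate_succ_apply']
        exact (Polynomial.derivative^[m] g).hasDerivAt x)
      (fun x _ => s.hasDerivAt x)
      ((Polynomial.continuous _).intervalIntegrable _ _)
      ((Polynomial.continuous _).intervalIntegrable _ _)
    have hbdry := hvan m (Nat.lt_succ_self m)
    simp only [hbdry.1, hbdry.2, zero_mul, sub_zero] at key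
    have h2 : ∫ x in a..b, (Polynomial.derivative^[m] g).eval x *
        (Polynomial.derivative s).eval x = 0 := by
      rcases eq_or_ne (Polynomial.derivative s) 0 with h | h
      · simp [h]
      · refine ih g (Polynomial.derivative s) a b
          (fun j hj => hvan j (hj.trans (Nat.lt_succ_self m))) ?_
        rcases Nat.eq_zero_or_pos s.natDegree with h0 | h0
        · exact absurd (by rw [Polynomial.eq_C_of_natDegree_eq_zero h0]; simp) h
        · have := Polynomial.natDegree_derivative_lt h0.ne'
          omega
    have hadd := intervalIntegral.integral_add (μ := volume) (a := a) (b := b)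
      (f := fun x => (Polynomial.derivative^[m+1] g).eval x * s.eval x)
      (g := fun x => (Polynomial.derivative^[m] g).eval x *
        (Polynomial.derivative s).eval x)
      (((Polynomial.continuous _).mul (Polynomial.continuous _)).intervalIntegrable _ _)
      (((Polynomial.continuous _).mul (Polynomial.continuous _)).intervalIntegrable _ _)
    rw [key, h2, add_zero] at hadd
    exact hadd.symm

lemma iter_comp (P : ℝ[X]) (j : ℕ) :
    Polynomial.derivative^[j] (P.comp (C 2 * X - C 1)) =
      C ((2:ℝ)^j) * (Polynomial.derivative^[j] P).comp (C 2 * X - C 1) := by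
  induction j with
  | zero => simp
  | succ j ihj =>
    rw [Function.iterate_succ_apply', ihj, Polynomial.derivative_mul, Polynomial.derivative_C,
      zero_mul, zero_add, Polynomial.derivative_comp, Function.iterate_succ_apply']
    have : Polynomial.derivative (C (2:ℝ) * X - C 1) = C 2 := by simp
    rw [this, pow_succ, C_mul]
    ring

/-- Jump properties of the edge nonconforming bubble `b = L_p(1 − 2λ_A)`:
(a) `b ≡ 1` on the edge from `B` to `C`;
(b) on the edges emanating from `A`, `b` restricts to `L_p(2t−1)`;
(c) consequently the moments of `b` on those edges against polynomials of degree at most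
`p − 1` vanish. -/
theorem edge_bubble_properties (p : ℕ) (hp_pos : 0 < p)
    (A B C : Fin 2 → ℝ) (hABC : AffineIndependent ℝ ![A, B, C])
    (lamA : (Fin 2 → ℝ) →ᵃ[ℝ] ℝ)
    (hA : lamA A = 1) (hB : lamA B = 0) (hC : lamA C = 0)
    (b : (Fin 2 → ℝ) → ℝ)
    (hb : ∀ x : Fin 2 → ℝ, b x = (legendre p).eval (1 - 2 * lamA x)) :
    (∀ t ∈ Set.Icc (0:ℝ) 1, b (B + t • (C - B)) = 1) ∧
    (∀ X ∈ ({B, C} : Set (Fin 2 → ℝ)), ∀ t ∈ Set.Icc (0:ℝ) 1,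
      b (A + t • (X - A)) = (legendre p).eval (2 * t - 1)) ∧
    (∀ X ∈ ({B, C} : Set (Fin 2 → ℝ)), ∀ q : Polynomial ℝ, q.natDegree ≤ p - 1 →
      ∫ t in (0:ℝ)..1, b (A + t • (X - A)) * q.eval t = 0) := by
  have hlin : ∀ (P Q : Fin 2 → ℝ) (t : ℝ),
      lamA (P + t • (Q - P)) = lamA P + t * (lamA Q - lamA P) := by
    intro P Q t
    have h1 : P + t • (Q - P) = t • (Q - P) +ᵥ P := by
      simp [vadd_eq_add, add_comm]
    rw [h1, AffineMap.map_vadd, lamA.linear.map_smul]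
    have h2 : lamA.linear (Q - P) = lamA Q - lamA P := by
      simpa using lamA.linearMap_vsub Q P
    rw [h2]
    simp [vadd_eq_add, smul_eq_mul]
    ring
  have hiter : ((fun q : Polynomial ℝ => Polynomial.derivative q)^[p])
      = Polynomial.derivative^[p] := rfl
  refine ⟨?_, ?_, ?_⟩
  · intro t _
    rw [hb, hlin, hB, hC]
    norm_num [legendre_eval_one]
  · intro X hX t _
    have hX0 : lamA X = 0 := by
      simp only [Set.mem_insert_iff, Set.mem_singleton_iff] at hX
      rcases hX with rfl | rfl
      · exact hB
      · exact hC
    rw [hb, hlin, hA, hX0]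
    congr 1
    ring
  · intro X hX q hq
    have hX0 : lamA X = 0 := by
      simp only [Set.mem_insert_iff, Set.mem_singleton_iff] at hX
      rcases hX with rfl | rfl
      · exact hB
      · exact hC
    have hdeg : q.natDegree < p := by omega
    set g : ℝ[X] := ((((Polynomial.X : ℝ[X])^2 - 1)^p).comp
      (Polynomial.C 2 * Polynomial.X - Polynomial.C 1)) with hg
    have hint : ∀ t : ℝ, b (A + t • (X - A)) * q.eval t
        = (((2:ℝ)^p * p.factorial)⁻¹ * ((2:ℝ)^p)⁻¹) *
          ((Polynomial.derivative^[p] g).eval t * q.eval t) := by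
      intro t
      rw [hb, hlin, hA, hX0]
      have e1 : (Polynomial.derivative^[p] g).eval t
          = (2:ℝ)^p *
            (Polynomial.derivative^[p]
              (((Polynomial.X : ℝ[X])^2 - 1)^p)).eval (2*t - 1) := by
        rw [hg, iter_comp, eval_mul, eval_C, eval_comp]
        norm_num
      rw [e1, legendre, hiter, eval_smul, smul_eq_mul,
        show 1 - 2*(1 + t*(0-1)) = 2*t - 1 by ring]
      have h2 : ((2:ℝ)^p * p.factorial) ≠ 0 := by positivity
      have h3 : ((2:ℝ)^p) ≠ 0 := by positivity
      field_simp
    simp only [hint]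
    rw [intervalIntegral.integral_const_mul,
      ibp p g q 0 1 ?_ hdeg, mul_zero]
    intro j hj
    rw [hg, iter_comp]
    constructor
    · rw [eval_mul, eval_C, eval_comp]
      norm_num [vanish_neg_one p j hj]
    · rw [eval_mul, eval_C, eval_comp]
      norm_num [vanish_one p j hj]
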